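/- K × K is contained in ψ(K): for every pair (k₀, k₁) ∈ K × K there exists g ∈ K ∩ St_Γ(1) with ψ(g) = (k₀, k₁). -/

import Mathlib

set_option maxHeartbeats 1000000

attribute [local instance] Classical.propDecidable

noncomputable section

namespace Grig

/-! ### The Grigorchuk group -/

/-- The action of the generator `a` on vertices (finite binary words). -/
def aFun : List Bool → List Bool
  | [] => []
  | x :: w => (!x) :: w

lemma aFun_invol : ∀ w, aFun (aFun w) = w := by
  intro w; cases w <;> simp [aFun]

/-- States of the automaton generating `b`, `c`, `d`. -/
inductive St | B | C | D

/-- The actions of `b`, `c`, `d` on vertices. -/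
def stFun : St → List Bool → List Bool
  | _, [] => []
  | .B, false :: w => false :: aFun w
  | .B, true :: w => true :: stFun .C w
  | .C, false :: w => false :: aFun w
  | .C, true :: w => true :: stFun .D w
  | .D, false :: w => false :: w
  | .D, true :: w => true :: stFun .B w

lemma stFun_invol : ∀ (s : St) (w : List Bool), stFun s (stFun s w) = w := by
  intro s w
  induction w generalizing s with
  | nil => cases s <;> rfl
  | cons x w ih => cases s <;> cases x <;> simp [stFun, aFun_invol, ih]

/-- The automorphism `a` of the binary rooted tree. -/
def a : Equiv.Perm (List Bool) := ⟨aFun, aFun, aFun_invol, aFun_invol⟩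
/-- The automorphism `b`. -/
def b : Equiv.Perm (List Bool) := ⟨stFun .B, stFun .B, stFun_invol .B, stFun_invol .B⟩
/-- The automorphism `c`. -/
def c : Equiv.Perm (List Bool) := ⟨stFun .C, stFun .C, stFun_invol .C, stFun_invol .C⟩
/-- The automorphism `d`. -/
def d : Equiv.Perm (List Bool) := ⟨stFun .D, stFun .D, stFun_invol .D, stFun_invol .D⟩

/-- The Grigorchuk group `Γ`, as the subgroup of the group of permutations of the
vertex set generated by the four automorphisms `a, b, c, d` (which indeed preserve word
length and initial segments, so `Γ` is a subgroup of `Aut(T)`). -/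
def Grigorchuk : Subgroup (Equiv.Perm (List Bool)) := Subgroup.closure {a, b, c, d}

/-- `a` as an element of `Γ`. -/
def ga : Grigorchuk := ⟨a, Subgroup.subset_closure (by simp)⟩
/-- `b` as an element of `Γ`. -/
def gb : Grigorchuk := ⟨b, Subgroup.subset_closure (by simp)⟩
/-- `c` as an element of `Γ`. -/
def gc : Grigorchuk := ⟨c, Subgroup.subset_closure (by simp)⟩
/-- `d` as an element of `Γ`. -/
def gd : Grigorchuk := ⟨d, Subgroup.subset_closure (by simp)⟩

/-- The first level stabilizer `St_Γ(1)` of `Γ`. -/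
def St1 : Subgroup Grigorchuk where
  carrier := {g | (g : Equiv.Perm (List Bool)) [false] = [false] ∧
                  (g : Equiv.Perm (List Bool)) [true] = [true]}
  one_mem' := ⟨rfl, rfl⟩
  mul_mem' := by
    rintro g h ⟨hg1, hg2⟩ ⟨hh1, hh2⟩
    refine ⟨?_, ?_⟩ <;>
      simp only [Subgroup.coe_mul, Equiv.Perm.mul_apply, hh1, hh2, hg1, hg2]
  inv_mem' := by
    rintro g ⟨hg1, hg2⟩
    refine ⟨?_, ?_⟩
    · conv_lhs => rw [← hg1]
      simp
    · conv_lhs => rw [← hg2]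
      simp

/-- The subgroup `K`, the normal closure of `abab` in `Γ`. -/
def K : Subgroup Grigorchuk := Subgroup.normalClosure {ga * gb * ga * gb}

instance : K.Normal := Subgroup.normalClosure_normal

/-- The canonical projection `π_K : Γ → Γ/K`. -/
def piK : Grigorchuk →* Grigorchuk ⧸ K := QuotientGroup.mk' K

/-- `ψ_i(g)` (`i ∈ {0,1}`, encoded by `false`/`true`): the automorphism determined by
`g(i·w) = i·ψ_i(g)(w)`, when it exists in `Γ` (it does for `g ∈ St_Γ(1)`);
junk value `1` otherwise. -/
def psiG (i : Bool) (g : Grigorchuk) : Grigorchuk :=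
  if h : ∃ k : Grigorchuk, ∀ w : List Bool,
      (g : Equiv.Perm (List Bool)) (i :: w) = i :: (k : Equiv.Perm (List Bool)) w
  then h.choose else 1

/-- `ū`: the closest element of `St_Γ(1)`. -/
def bar (g : Grigorchuk) : Grigorchuk := if g ∈ St1 then g else g * ga

/-- The word length of `g ∈ Γ` with respect to the generating set `{a,b,c,d}`
(each generator is an involution, so inverses of generators are not needed). -/
def wlen (g : Grigorchuk) : ℕ :=
  sInf {n | ∃ l : List Grigorchuk, l.length = n ∧
    (∀ x ∈ l, x ∈ ({ga, gb, gc, gd} : Set Grigorchuk)) ∧ l.prod = g}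



/-! ### Words and equations over a group -/

/-- A letter: a constant from `G`, or a variable `x ∈ ℕ` with a sign
(`true` for `x`, `false` for `x⁻¹`). -/
abbrev Letter (G : Type*) := G ⊕ (ℕ × Bool)

/-- A word over `G` with variables: `W = u₁u₂⋯u_k`, `u_i ∈ G ∪ X^{±1}`. -/
abbrev Word (G : Type*) := List (Letter G)

variable {G : Type*} [Group G]

/-- The constant letter. -/
def Cst (g : G) : Letter G := Sum.inl g
/-- The letter `x`. -/
def Vp {G : Type*} (x : ℕ) : Letter G := Sum.inr (x, true)
/-- The letter `x⁻¹`. -/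
def Vm {G : Type*} (x : ℕ) : Letter G := Sum.inr (x, false)

/-- The element of the free product `G ∗ F_X` represented by a word. -/
def wordProd (W : Word G) : Monoid.Coprod G (FreeGroup ℕ) :=
  (W.map (fun u => match u with
    | Sum.inl g => Monoid.Coprod.inl g
    | Sum.inr (x, e) =>
        Monoid.Coprod.inr (if e then FreeGroup.of x else (FreeGroup.of x)⁻¹))).prod

/-- Number of occurrences of the letter `x^ε` (`ε` given by `e`) in `W`. -/
def occ (W : Word G) (x : ℕ) (e : Bool) : ℕ :=
  W.countP (fun u => match u with
    | Sum.inr (y, f) => y == x && f == e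
    | _ => false)

/-- Total number of occurrences of the variable `x` in `W` (occurrences of both
`x` and `x⁻¹` are counted). -/
def nocc (W : Word G) (x : ℕ) : ℕ := occ W x true + occ W x false

/-- `Var(W)`: the set of variables occurring in `W`. -/
def Vars (W : Word G) : Set ℕ := {x | nocc W x ≠ 0}

/-- A word is quadratic if every variable occurring in it occurs exactly twice. -/
def IsQuadratic (W : Word G) : Prop := ∀ x ∈ Vars W, nocc W x = 2

/-- A word is orientable if every variable occurring in it occurs exactly once with
exponent `+1` and once with exponent `-1`. -/
def Orientable (W : Word G) : Prop := ∀ x ∈ Vars W, occ W x true = 1 ∧ occ W x false = 1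

/-- Formal inverse of a word. -/
def wordInv (W : Word G) : Word G :=
  (W.map (fun u => match u with
    | Sum.inl g => Sum.inl g⁻¹
    | Sum.inr (x, e) => (Sum.inr (x, !e) : Letter G))).reverse

/-- The commutator word `[x,y] = x⁻¹y⁻¹xy`. -/
def comm {G : Type*} (x y : ℕ) : Word G := [Vm x, Vm y, Vp x, Vp y]
/-- The square word `x² = x·x`. -/
def sq {G : Type*} (x : ℕ) : Word G := [Vp x, Vp x]
/-- The coefficient factor `z⁻¹cz`. -/
def cf (z : ℕ) (c : G) : Word G := [Vm z, Cst c, Vp z]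

/-- Concatenation of a list of words. -/
def listJoin {α : Type*} (l : List (List α)) : List α := l.foldr (· ++ ·) []

/-- The commutator part `[x₁,y₁]⋯[x_g,y_g]`. -/
def commPart {G : Type*} (g : ℕ) (xs ys : Fin g → ℕ) : Word G :=
  listJoin (List.ofFn fun i => comm (xs i) (ys i))
/-- The square part `x₁²⋯x_g²`. -/
def sqPart {G : Type*} (g : ℕ) (xs : Fin g → ℕ) : Word G :=
  listJoin (List.ofFn fun i => sq (xs i))
/-- The coefficient part `z₁⁻¹c₁z₁⋯z_m⁻¹c_mz_m`. -/
def coefPart (m : ℕ) (zs : Fin m → ℕ) (cs : Fin m → G) : Word G :=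
  listJoin (List.ofFn fun i => cf (zs i) (cs i))

/-- The standard orientable quadratic word
`[x₁,y₁]⋯[x_g,y_g]·z₁⁻¹c₁z₁⋯z_m⁻¹c_mz_m`. -/
def stdOr (g m : ℕ) (xs ys : Fin g → ℕ) (zs : Fin m → ℕ) (cs : Fin m → G) : Word G :=
  commPart g xs ys ++ coefPart m zs cs

/-- The standard non-orientable quadratic word
`x₁²⋯x_g²·z₁⁻¹c₁z₁⋯z_m⁻¹c_mz_m`. -/
def stdNonOr (g m : ℕ) (xs : Fin g → ℕ) (zs : Fin m → ℕ) (cs : Fin m → G) : Word G :=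
  sqPart g xs ++ coefPart m zs cs

/-- The variables `x₁,…,x_g,y₁,…,y_g,z₁,…,z_m` are pairwise distinct. -/
def DistinctVars (g m : ℕ) (xs ys : Fin g → ℕ) (zs : Fin m → ℕ) : Prop :=
  Function.Injective (fun p : (Fin g ⊕ Fin g) ⊕ Fin m =>
    match p with
    | Sum.inl (Sum.inl i) => xs i
    | Sum.inl (Sum.inr i) => ys i
    | Sum.inr i => zs i)

/-- The variables `x₁,…,x_g,z₁,…,z_m` are pairwise distinct. -/
def DistinctVarsN (g m : ℕ) (xs : Fin g → ℕ) (zs : Fin m → ℕ) : Prop :=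
  Function.Injective (fun p : Fin g ⊕ Fin m =>
    match p with
    | Sum.inl i => xs i
    | Sum.inr i => zs i)

/-- `α : G ∗ F_X → G` is a `G`-homomorphism (identical on `G`). -/
def IsGHom (α : Monoid.Coprod G (FreeGroup ℕ) →* G) : Prop :=
  ∀ g : G, α (Monoid.Coprod.inl g) = g

/-- The value of a homomorphism at a variable. -/
def xval (α : Monoid.Coprod G (FreeGroup ℕ) →* G) (x : ℕ) : G :=
  α (Monoid.Coprod.inr (FreeGroup.of x))

/-- The equation `W = 1` has a solution in `G`. -/
def Solvable (W : Word G) : Prop :=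
  ∃ α : Monoid.Coprod G (FreeGroup ℕ) →* G, IsGHom α ∧ α (wordProd W) = 1

/-- The system of equations `{W = 1 | W ∈ Ws}` with constraint `γ` modulo `H`
has a solution in `G`. -/
def SolvableC (H : Subgroup G) [H.Normal] (Ws : List (Word G)) (γ : ℕ → G ⧸ H) : Prop :=
  ∃ α : Monoid.Coprod G (FreeGroup ℕ) →* G, IsGHom α ∧
    (∀ W ∈ Ws, α (wordProd W) = 1) ∧
    ∀ x : ℕ, (∃ W ∈ Ws, x ∈ Vars W) → (QuotientGroup.mk' H) (xval α x) = γ x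

/-- A finitely supported `G`-automorphism of `G ∗ F_X`. -/
def IsFinGAut (φ : Monoid.Coprod G (FreeGroup ℕ) ≃* Monoid.Coprod G (FreeGroup ℕ)) : Prop :=
  (∀ g : G, φ (Monoid.Coprod.inl g) = Monoid.Coprod.inl g) ∧
  {x : ℕ | φ (Monoid.Coprod.inr (FreeGroup.of x)) ≠
      Monoid.Coprod.inr (FreeGroup.of x)}.Finite

/-- Two words are equivalent if some finitely supported `G`-automorphism sends (the
element of `G ∗ F_X` represented by) the first to a conjugate of the second. -/
def EquivWords (Wa Wb : Word G) : Prop :=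
  ∃ φ : Monoid.Coprod G (FreeGroup ℕ) ≃* Monoid.Coprod G (FreeGroup ℕ),
    IsFinGAut φ ∧ IsConj (φ (wordProd Wa)) (wordProd Wb)

/-- The homomorphism `G ∗ F_X → G/H` extending a constraint `γ` (equal to `π_H` on `G`
and to `γ` on the variables). -/
def constraintHom (H : Subgroup G) [H.Normal] (γ : ℕ → G ⧸ H) :
    Monoid.Coprod G (FreeGroup ℕ) →* G ⧸ H :=
  Monoid.Coprod.lift (QuotientGroup.mk' H) (FreeGroup.lift γ)

/-- Equivalence of constrained equations `(Wa = 1, γ)` and `(Wb = 1, ζ)`. -/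
def EquivWordsC (H : Subgroup G) [H.Normal] (Wa : Word G) (γ : ℕ → G ⧸ H)
    (Wb : Word G) (ζ : ℕ → G ⧸ H) : Prop :=
  ∃ φ : Monoid.Coprod G (FreeGroup ℕ) ≃* Monoid.Coprod G (FreeGroup ℕ),
    IsFinGAut φ ∧ IsConj (φ (wordProd Wa)) (wordProd Wb) ∧
    constraintHom H ζ = (constraintHom H γ).comp φ.toMonoidHom

/-- `W₁ #ₓ W₂`, for `W₁ = U₁ x^{ε₁} V₁` and `W₂ = U₂ x^{ε₂} V₂`:
the word `U₁ (V₂U₂)^{-ε₁ε₂} V₁`. -/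
def joinAt (U₁ V₁ U₂ V₂ : Word G) (e₁ e₂ : Bool) : Word G :=
  U₁ ++ (if e₁ = e₂ then wordInv (V₂ ++ U₂) else V₂ ++ U₂) ++ V₁



/-! ### The splitting map `Ψ` for words over `Γ` -/

/-- The image `St_Γ(1)/K` in `Γ/K` (well defined since `K ⊆ St_Γ(1)`). -/
def StQ : Subgroup (Grigorchuk ⧸ K) := St1.map (QuotientGroup.mk' K)

/-- The coset modulo `St_Γ(1)` of a letter, under the constraint `γ`
(`false` = trivial coset, `true` = nontrivial coset). -/
def letterBit (γ : ℕ → Grigorchuk ⧸ K) : Letter Grigorchuk → Bool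
  | Sum.inl g => if g ∈ St1 then false else true
  | Sum.inr (x, _) => if γ x ∈ StQ then false else true

/-- `σ_γ(W)`: the coset modulo `St_Γ(1)` of a word, under the constraint `γ`
(`false` = trivial coset `1`). -/
def sigmaW (γ : ℕ → Grigorchuk ⧸ K) : Word Grigorchuk → Bool
  | [] => false
  | u :: W => xor (letterBit γ u) (sigmaW γ W)

variable (d0 d1 : ℕ → ℕ)

/-- The descendant `x_j` of the variable `x` (given the two fixed injections). -/
def dsc (j : Bool) (x : ℕ) : ℕ := if j then d1 x else d0 x

/-- The letter of `Ψ_i(W)` replacing a letter of `W`, where `s` is the coset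
`σ_γ(u₁⋯u_{i-1})` of the preceding prefix. -/
def psiLetter (γ : ℕ → Grigorchuk ⧸ K) (i : Bool) (s : Bool) :
    Letter Grigorchuk → Letter Grigorchuk
  | Sum.inl g => Sum.inl (if s then psiG i (ga * bar g * ga) else psiG i (bar g))
  | Sum.inr (x, true) => Sum.inr (dsc d0 d1 (xor i s) x, true)
  | Sum.inr (x, false) =>
      Sum.inr (dsc d0 d1 (xor i (xor s (letterBit γ (Sum.inr (x, false))))) x, false)

/-- Auxiliary recursion for `Ψ_i`, carrying the coset of the processed prefix. -/
def psiGo (γ : ℕ → Grigorchuk ⧸ K) (i : Bool) : Bool → Word Grigorchuk → Word Grigorchuk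
  | _, [] => []
  | s, u :: W => psiLetter d0 d1 γ i s u :: psiGo γ i (xor s (letterBit γ u)) W

/-- The splitting `Ψ_i(W)` of a word `W` with respect to the constraint `γ`. -/
def PsiW (γ : ℕ → Grigorchuk ⧸ K) (i : Bool) (W : Word Grigorchuk) : Word Grigorchuk :=
  psiGo d0 d1 γ i false W

/-- `q̄` for `q ∈ Γ/K`: the closest element of `St_Γ(1)/K`. -/
def barQ (q : Grigorchuk ⧸ K) : Grigorchuk ⧸ K :=
  if q ∈ StQ then q else q * (QuotientGroup.mk' K ga)


/-! ### Auxiliary material for the proof -/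

lemma aFun_cons (x : Bool) (w : List Bool) : aFun (x :: w) = (!x) :: w := rfl
lemma sB0 (w : List Bool) : stFun .B (false :: w) = false :: aFun w := rfl
lemma sB1 (w : List Bool) : stFun .B (true :: w) = true :: stFun .C w := rfl
lemma sC0 (w : List Bool) : stFun .C (false :: w) = false :: aFun w := rfl
lemma sC1 (w : List Bool) : stFun .C (true :: w) = true :: stFun .D w := rfl
lemma sD0 (w : List Bool) : stFun .D (false :: w) = false :: w := rfl
lemma sD1 (w : List Bool) : stFun .D (true :: w) = true :: stFun .B w := rfl

/-- `b`, `c`, `d` form a Klein four group (together with `1`). -/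
lemma stKlein : ∀ w : List Bool,
    stFun .C (stFun .D w) = stFun .B w ∧
    stFun .D (stFun .B w) = stFun .C w ∧
    stFun .B (stFun .C w) = stFun .D w := by
  intro w
  induction w with
  | nil => exact ⟨rfl, rfl, rfl⟩
  | cons x w ih =>
    cases x
    · refine ⟨rfl, rfl, ?_⟩
      simp [sB0, sC0, sD0, aFun_invol]
    · refine ⟨?_, ?_, ?_⟩ <;>
        simp [sB1, sC1, sD1, ih.1, ih.2.1, ih.2.2]

/-- `g` admits `k` as its section at the subtree rooted at `i`. -/
def Spec (i : Bool) (g k : Grigorchuk) : Prop :=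
  ∀ w : List Bool, (g : Equiv.Perm (List Bool)) (i :: w) = i :: (k : Equiv.Perm (List Bool)) w

lemma spec_one (i : Bool) : Spec i 1 1 := fun _ => rfl

lemma spec_mul {i : Bool} {g g' k k' : Grigorchuk} (h : Spec i g k) (h' : Spec i g' k') :
    Spec i (g * g') (k * k') := by
  intro w
  simp only [Subgroup.coe_mul, Equiv.Perm.mul_apply]
  rw [h' w, h _]

lemma spec_inv {i : Bool} {g k : Grigorchuk} (h : Spec i g k) : Spec i g⁻¹ k⁻¹ := by
  intro w
  have h2 := h ((k : Equiv.Perm (List Bool))⁻¹ w)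
  rw [Equiv.Perm.coe_inv, Equiv.apply_symm_apply] at h2
  rw [← h2]
  simp

lemma psiG_spec {i : Bool} {g k : Grigorchuk} (h : Spec i g k) : psiG i g = k := by
  have hex : ∃ k' : Grigorchuk, ∀ w : List Bool,
      (g : Equiv.Perm (List Bool)) (i :: w) = i :: (k' : Equiv.Perm (List Bool)) w := ⟨k, h⟩
  rw [psiG, dif_pos hex]
  have hch := hex.choose_spec
  apply Subtype.ext
  apply Equiv.ext
  intro w
  have := (hch w).symm.trans (h w)
  simpa using this

lemma fix_nil (p : Grigorchuk) : (p : Equiv.Perm (List Bool)) [] = [] := by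
  obtain ⟨x, hx⟩ := p
  refine Subgroup.closure_induction (p := fun x _ => x [] = []) ?_ rfl ?_ ?_ hx
  · intro y hy
    simp only [Set.mem_insert_iff, Set.mem_singleton_iff] at hy
    rcases hy with rfl | rfl | rfl | rfl <;> rfl
  · intro y z _ _ hy hz
    simp only [Equiv.Perm.mul_apply, hz, hy]
  · intro y _ hy
    have h2 := congrArg (⇑y⁻¹) hy
    simp only [Equiv.Perm.coe_inv, Equiv.symm_apply_apply] at h2
    exact h2.symm

lemma mem_st1_of_specs {g p q : Grigorchuk} (h0 : Spec false g p) (h1 : Spec true g q) :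
    g ∈ St1 := by
  constructor
  · have := h0 []; rw [fix_nil] at this; simpa using this
  · have := h1 []; rw [fix_nil] at this; simpa using this

/- Application lemmas for the generators. -/
lemma ga_app (w : List Bool) : (ga : Equiv.Perm (List Bool)) w = aFun w := rfl
lemma gb_app (w : List Bool) : (gb : Equiv.Perm (List Bool)) w = stFun .B w := rfl
lemma gc_app (w : List Bool) : (gc : Equiv.Perm (List Bool)) w = stFun .C w := rfl
lemma gd_app (w : List Bool) : (gd : Equiv.Perm (List Bool)) w = stFun .D w := rfl
lemma gone_app (w : List Bool) : ((1 : Grigorchuk) : Equiv.Perm (List Bool)) w = w := rfl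

/- Specs for the standard generators of `St1`. -/
lemma spec_b0 : Spec false gb ga := fun _ => rfl
lemma spec_b1 : Spec true gb gc := fun _ => rfl
lemma spec_c0 : Spec false gc ga := fun _ => rfl
lemma spec_c1 : Spec true gc gd := fun _ => rfl
lemma spec_d0 : Spec false gd 1 := fun _ => rfl
lemma spec_d1 : Spec true gd gb := fun _ => rfl
lemma spec_aba0 : Spec false (ga * gb * ga) gc := fun _ => rfl
lemma spec_aba1 : Spec true (ga * gb * ga) ga := fun _ => rfl

lemma spec_conj_a {g p : Grigorchuk} {i : Bool} (hg : Spec i g p) :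
    Spec (!i) (ga * g * ga) p := by
  intro w
  simp only [Subgroup.coe_mul, Equiv.Perm.mul_apply]
  have h1 : (ga : Equiv.Perm (List Bool)) ((!i) :: w) = i :: w := by cases i <;> rfl
  rw [h1, hg w]
  cases i <;> rfl

lemma ga_sq : ga * ga = 1 := Subtype.ext (Equiv.ext fun w => aFun_invol w)
lemma gc_sq : gc * gc = 1 := Subtype.ext (Equiv.ext fun w => stFun_invol .C w)
lemma ga_inv : ga⁻¹ = ga := inv_eq_of_mul_eq_one_left ga_sq
lemma gc_inv : gc⁻¹ = gc := inv_eq_of_mul_eq_one_left gc_sq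

/-- `t = abab`, the generator of `K` as a normal subgroup. -/
def gt : Grigorchuk := ga * gb * ga * gb

lemma gt_mem_K : gt ∈ K := Subgroup.subset_normalClosure rfl

/-- `e = t · ctc = (abad)²`, an element of `K` with `ψ(e) = (1, t)`. -/
def egen : Grigorchuk := gt * (gc * gt * gc)

lemma egen_mem_K : egen ∈ K := by
  have h : gc * gt * gc⁻¹ ∈ K :=
    Subgroup.Normal.conj_mem (by infer_instance) gt gt_mem_K gc
  rw [gc_inv] at h
  exact mul_mem gt_mem_K h

lemma gt_app (w : List Bool) :
    (gt : Equiv.Perm (List Bool)) w = aFun (stFun .B (aFun (stFun .B w))) := rfl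

lemma egen_spec0 : Spec false egen 1 := by
  intro w
  show aFun (stFun .B (aFun (stFun .B (stFun .C (aFun (stFun .B (aFun (stFun .B
      (stFun .C (false :: w))))))))))
      = false :: ((1 : Grigorchuk) : Equiv.Perm (List Bool)) w
  rw [gone_app]
  simp [aFun_cons, sB0, sB1, sC0, sC1, sD0, sD1, aFun_invol, stFun_invol]

lemma egen_spec1 : Spec true egen gt := by
  intro w
  show aFun (stFun .B (aFun (stFun .B (stFun .C (aFun (stFun .B (aFun (stFun .B
      (stFun .C (true :: w))))))))))
      = true :: (gt : Equiv.Perm (List Bool)) w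
  rw [gt_app]
  simp only [aFun_cons, sB0, sB1, sC0, sC1, sD0, sD1, Bool.not_true, Bool.not_false,
    aFun_invol, stFun_invol]
  simp only [show ∀ v, stFun .C (stFun .D v) = stFun .B v from fun v => (stKlein v).1]

/-- The subgroup of pairs `(ψ₀ g, ψ₁ g)` for `g ∈ K ∩ St1`. -/
def SS : Subgroup (Grigorchuk × Grigorchuk) where
  carrier := {p | ∃ g, g ∈ K ∧ Spec false g p.1 ∧ Spec true g p.2}
  one_mem' := ⟨1, one_mem K, spec_one _, spec_one _⟩
  mul_mem' := by
    rintro p q ⟨g, hgK, h0, h1⟩ ⟨g', hgK', h0', h1'⟩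
    exact ⟨g * g', mul_mem hgK hgK', spec_mul h0 h0', spec_mul h1 h1'⟩
  inv_mem' := by
    rintro p ⟨g, hgK, h0, h1⟩
    exact ⟨g⁻¹, inv_mem hgK, spec_inv h0, spec_inv h1⟩

lemma swap_SS {p q : Grigorchuk} (h : (p, q) ∈ SS) : (q, p) ∈ SS := by
  obtain ⟨g, hgK, h0, h1⟩ := h
  have hK : ga * g * ga⁻¹ ∈ K := Subgroup.Normal.conj_mem (by infer_instance) g hgK ga
  rw [ga_inv] at hK
  exact ⟨ga * g * ga, hK, spec_conj_a h1, spec_conj_a h0⟩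

/-- Surjectivity of `ψ₁ : St1 → Γ` (with a companion `ψ₀`-value). -/
lemma psi_surj (g : Grigorchuk) : ∃ h u : Grigorchuk, Spec false h u ∧ Spec true h g := by
  obtain ⟨x, hx⟩ := g
  refine Subgroup.closure_induction
    (p := fun x hx => ∃ h u : Grigorchuk, Spec false h u ∧ Spec true h ⟨x, hx⟩)
    ?_ ?_ ?_ ?_ hx
  · intro y hy
    simp only [Set.mem_insert_iff, Set.mem_singleton_iff] at hy
    rcases hy with rfl | rfl | rfl | rfl
    · exact ⟨ga * gb * ga, gc, spec_aba0, spec_aba1⟩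
    · exact ⟨gd, 1, spec_d0, spec_d1⟩
    · exact ⟨gb, ga, spec_b0, spec_b1⟩
    · exact ⟨gc, ga, spec_c0, spec_c1⟩
  · exact ⟨1, 1, spec_one _, spec_one _⟩
  · rintro y z hy hz ⟨h, u, h0, h1⟩ ⟨h', u', h0', h1'⟩
    exact ⟨h * h', u * u', spec_mul h0 h0', spec_mul h1 h1'⟩
  · rintro y hy ⟨h, u, h0, h1⟩
    exact ⟨h⁻¹, u⁻¹, spec_inv h0, spec_inv h1⟩

/-- The subgroup `{k | (1, k) ∈ SS}`. -/
def N1 : Subgroup Grigorchuk where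
  carrier := {k | ((1 : Grigorchuk), k) ∈ SS}
  one_mem' := SS.one_mem
  mul_mem' := by
    intro x y hx hy
    have := SS.mul_mem hx hy
    simpa using this
  inv_mem' := by
    intro x hx
    have := SS.inv_mem hx
    simpa using this

instance N1_normal : N1.Normal := by
  constructor
  intro n hn u
  obtain ⟨h, u0, hs0, hs1⟩ := psi_surj u
  obtain ⟨g, hgK, hg0, hg1⟩ := hn
  have hK : h * g * h⁻¹ ∈ K := Subgroup.Normal.conj_mem (by infer_instance) g hgK h
  have h0 : Spec false (h * g * h⁻¹) (u0 * 1 * u0⁻¹) :=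
    spec_mul (spec_mul hs0 hg0) (spec_inv hs0)
  have h1 : Spec true (h * g * h⁻¹) (u * n * u⁻¹) :=
    spec_mul (spec_mul hs1 hg1) (spec_inv hs1)
  rw [show u0 * 1 * u0⁻¹ = (1 : Grigorchuk) by simp] at h0
  exact ⟨h * g * h⁻¹, hK, h0, h1⟩

lemma K_le_N1 : K ≤ N1 := by
  apply Subgroup.normalClosure_le_normal
  intro x hx
  rw [Set.mem_singleton_iff] at hx
  subst hx
  exact ⟨egen, egen_mem_K, egen_spec0, egen_spec1⟩

end Grig

/-- **Lemma (K × K ⊆ ψ(K)).** For every pair `(k₀, k₁) ∈ K × K` there exists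
`g ∈ K ∩ St_Γ(1)` with `ψ(g) = (k₀, k₁)`. -/
theorem Grig.K_times_K_subset_psi_K (k0 k1 : Grigorchuk) (hk0 : k0 ∈ K) (hk1 : k1 ∈ K) :
    ∃ g : Grigorchuk, g ∈ K ∧ g ∈ St1 ∧ psiG false g = k0 ∧ psiG true g = k1 := by
  have h1 : ((1 : Grigorchuk), k1) ∈ SS := K_le_N1 hk1
  have h0 : (k0, (1 : Grigorchuk)) ∈ SS := swap_SS (K_le_N1 hk0)
  have hm := SS.mul_mem h0 h1
  rw [Prod.mk_mul_mk, mul_one, one_mul] at hm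
  obtain ⟨g, hK, s0, s1⟩ := hm
  exact ⟨g, hK, mem_st1_of_specs s0 s1, psiG_spec s0, psiG_spec s1⟩
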